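/- With A(V,S) the quotient of the nonunital symmetric algebra Sym(V)_+ by the ideal I(S) as in the context, the set of algebra automorphisms of A(V,S) that map the degree-1 subspace V onto itself equals GL(V)_S = {g ∈ GL(V) : Sym^r(g)(S) = S} (acting on A(V,S) via the induced action on Sym(V)_+). That is, {σ ∈ Aut(A(V,S)) : σ(V) = V} = GL(V)_S. -/

import Mathlib

open MvPolynomial



open MvPolynomial

-- decomposition of an exponent vector of degree i+1
lemma GP_decomp {σ : Type*} {d : σ →₀ ℕ} {i : ℕ} (hd : d.degree = i + 1) :
    ∃ (j : σ) (d' : σ →₀ ℕ), d = d' + Finsupp.single j 1 ∧ d'.degree = i := by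
  classical
  have hd0 : d ≠ 0 := by
    intro h; rw [h, map_zero] at hd; omega
  obtain ⟨j, hj⟩ := Finsupp.support_nonempty_iff.mpr hd0
  have h1 : Finsupp.single j 1 ≤ d := by
    rw [Finsupp.single_le_iff]
    exact Nat.one_le_iff_ne_zero.mpr (Finsupp.mem_support_iff.mp hj)
  have hcancel : (d - Finsupp.single j 1) + Finsupp.single j 1 = d :=
    tsub_add_cancel_of_le h1
  refine ⟨j, d - Finsupp.single j 1, hcancel.symm, ?_⟩
  have hds : (Finsupp.single j 1).degree = 1 := by
    simp [Finsupp.degree_single]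
  have : (d - Finsupp.single j 1).degree + (Finsupp.single j 1).degree = d.degree := by
    conv_rhs => rw [← hcancel]
    simp only [Finsupp.degree_eq_weight_one, map_add]
  omega

-- homogeneous submodule is spanned by monomials
lemma GP_span (σ R : Type*) [CommSemiring R] (i : ℕ) :
    homogeneousSubmodule σ R i =
      Submodule.span R ((fun d => (monomial d (1:R) : MvPolynomial σ R)) ''
        {d : σ →₀ ℕ | d.degree = i}) := by
  rw [homogeneousSubmodule_eq_finsupp_supported, AddMonoidAlgebra.supported_eq_span_single]
  simp only [single_eq_monomial]

-- aeval with degree-1 homogeneous values preserves homogeneity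
lemma GP_pres {σ R : Type*} [CommSemiring R] (f : σ → MvPolynomial σ R)
    (hf : ∀ j, (f j).IsHomogeneous 1) {i : ℕ} {p : MvPolynomial σ R}
    (hp : p ∈ homogeneousSubmodule σ R i) : aeval f p ∈ homogeneousSubmodule σ R i := by
  rw [mem_homogeneousSubmodule] at hp ⊢
  simpa using hp.aeval f hf

lemma GP_monomial_deg1 {σ : Type*} {d : σ →₀ ℕ} (hd : d.degree = 1) :
    ∃ j, d = Finsupp.single j 1 := by
  obtain ⟨j, d', h, h0⟩ := GP_decomp hd
  rw [Finsupp.degree_eq_zero_iff] at h0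
  exact ⟨j, by rw [h, h0, zero_add]⟩

lemma GP_aeval_deg1 {σ R : Type*} [CommSemiring R]
    (g : ↥(homogeneousSubmodule σ R 1) →ₗ[R] ↥(homogeneousSubmodule σ R 1))
    {x : MvPolynomial σ R} (hx : x ∈ homogeneousSubmodule σ R 1) :
    aeval (fun j => (↑(g ⟨X j, (mem_homogeneousSubmodule _ _).2 (isHomogeneous_X R j)⟩) :
      MvPolynomial σ R)) x = ↑(g ⟨x, hx⟩) := by
  set f := fun j => (↑(g ⟨X j, (mem_homogeneousSubmodule _ _).2 (isHomogeneous_X R j)⟩) :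
      MvPolynomial σ R) with hf
  suffices H : ∀ y, y ∈ Submodule.span R ((fun d => (monomial d (1:R) : MvPolynomial σ R)) ''
      {d : σ →₀ ℕ | d.degree = 1}) → ∀ h : y ∈ homogeneousSubmodule σ R 1,
      aeval f y = ↑(g ⟨y, h⟩) by
    exact H x (by rwa [← GP_span]) hx
  intro y hy
  induction hy using Submodule.span_induction with
  | mem z hz =>
    obtain ⟨d, hd, rfl⟩ := hz
    obtain ⟨j, rfl⟩ := GP_monomial_deg1 hd
    intro h
    show aeval f (X j) = _
    simp only [aeval_X, hf]
    exact congrArg _ (congrArg g (Subtype.ext rfl))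
  | zero =>
    intro h
    have : (⟨(0:MvPolynomial σ R), h⟩ : ↥(homogeneousSubmodule σ R 1)) = 0 := rfl
    rw [this]
    simp
  | add a b ha hb iha ihb =>
    intro h
    have ha' : a ∈ homogeneousSubmodule σ R 1 := by rwa [GP_span]
    have hb' : b ∈ homogeneousSubmodule σ R 1 := by rwa [GP_span]
    have : (⟨a + b, h⟩ : ↥(homogeneousSubmodule σ R 1)) = ⟨a, ha'⟩ + ⟨b, hb'⟩ := rfl
    rw [this, map_add, map_add, Submodule.coe_add, iha ha', ihb hb']
  | smul c a ha iha =>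
    intro h
    have ha' : a ∈ homogeneousSubmodule σ R 1 := by rwa [GP_span]
    have : (⟨c • a, h⟩ : ↥(homogeneousSubmodule σ R 1)) = c • ⟨a, ha'⟩ := rfl
    rw [this, map_smul, map_smul, Submodule.coe_smul, iha ha']


lemma GP_aeval_deg1' {σ R : Type*} [CommSemiring R]
    (g : ↥(homogeneousSubmodule σ R 1) ≃ₗ[R] ↥(homogeneousSubmodule σ R 1))
    {x : MvPolynomial σ R} (hx : x ∈ homogeneousSubmodule σ R 1) :
    aeval (fun j => (↑(g ⟨X j, (mem_homogeneousSubmodule _ _).2 (isHomogeneous_X R j)⟩) :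
      MvPolynomial σ R)) x = ↑(g ⟨x, hx⟩) :=
  GP_aeval_deg1 g.toLinearMap hx

lemma GP_aux {F A : Type*} [Field F] [AddCommGroup A] [Module F A]
    (n : ℕ) (r : ℕ) (hr : 1 < r)
    (mul : A →ₗ[F] A →ₗ[F] A)
    (ι : ∀ i : ℕ, ↥(homogeneousSubmodule (Fin n) F i) →ₗ[F] A)
    (hinj1 : Function.Injective (ι 1))
    (hmul : ∀ i ∈ Finset.Icc 1 r, ∀ j ∈ Finset.Icc 1 r,
      ∀ (x : homogeneousSubmodule (Fin n) F i) (y : homogeneousSubmodule (Fin n) F j),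
        mul (ι i x) (ι j y) =
          if h : i + j ≤ r then
            ι (i + j) ⟨(x : MvPolynomial (Fin n) F) * (y : MvPolynomial (Fin n) F),
              homogeneousSubmodule_mul i j (Submodule.mul_mem_mul x.2 y.2)⟩
          else 0)
    (σ : A ≃ₗ[F] A)
    (hσm : ∀ x y : A, σ (mul x y) = mul (σ x) (σ y))
    (hσ1 : Submodule.map σ.toLinearMap (LinearMap.range (ι 1)) = LinearMap.range (ι 1)) :
    ∃ g : ↥(homogeneousSubmodule (Fin n) F 1) ≃ₗ[F] ↥(homogeneousSubmodule (Fin n) F 1),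
      (∀ v, (ι 1) (g v) = σ ((ι 1) v)) ∧
      ∀ i, 1 ≤ i → i ≤ r → ∀ (x y : ↥(homogeneousSubmodule (Fin n) F i)),
        aeval (fun j : Fin n =>
            (↑(g ⟨X j, (mem_homogeneousSubmodule _ _).2 (isHomogeneous_X F j)⟩) :
          MvPolynomial (Fin n) F)) (x : MvPolynomial (Fin n) F) = (y : MvPolynomial (Fin n) F) →
        σ (ι i x) = ι i y := by
  classical
  set e1 : ↥(homogeneousSubmodule (Fin n) F 1) ≃ₗ[F] LinearMap.range (ι 1) :=
    LinearEquiv.ofInjective (ι 1) hinj1 with he1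
  set g : ↥(homogeneousSubmodule (Fin n) F 1) ≃ₗ[F] ↥(homogeneousSubmodule (Fin n) F 1) :=
    ((e1.trans (σ.submoduleMap (LinearMap.range (ι 1)))).trans
      (LinearEquiv.ofEq _ _ hσ1)).trans e1.symm with hgdef
  have hcoe : ∀ w : LinearMap.range (ι 1), ι 1 (e1.symm w) = ↑w := by
    intro w
    conv_rhs => rw [← e1.apply_symm_apply w]
    rw [he1]
    exact (LinearEquiv.ofInjective_apply _ _).symm
  have hg : ∀ v, (ι 1) (g v) = σ ((ι 1) v) := by
    intro v
    rw [hgdef]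
    simp only [LinearEquiv.trans_apply]
    rw [hcoe]
    rw [LinearEquiv.coe_ofEq_apply, LinearEquiv.submoduleMap_apply, he1,
      LinearEquiv.ofInjective_apply]
  set f : Fin n → MvPolynomial (Fin n) F := fun j =>
    (↑(g ⟨X j, (mem_homogeneousSubmodule _ _).2 (isHomogeneous_X F j)⟩) :
      MvPolynomial (Fin n) F) with hfdef
  have hf1 : ∀ j, (f j).IsHomogeneous 1 := fun j =>
    (g ⟨X j, (mem_homogeneousSubmodule _ _).2 (isHomogeneous_X F j)⟩).2
  have hpres : ∀ {i : ℕ} {p : MvPolynomial (Fin n) F},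
      p ∈ homogeneousSubmodule (Fin n) F i → aeval f p ∈ homogeneousSubmodule (Fin n) F i :=
    fun hp => GP_pres f hf1 hp
  have key : ∀ i, 1 ≤ i → ∀ p (hp : p ∈ homogeneousSubmodule (Fin n) F i), i ≤ r →
      σ (ι i ⟨p, hp⟩) = ι i ⟨aeval f p, hpres hp⟩ := by
    intro i hi1
    induction i, hi1 using Nat.le_induction with
    | base =>
      intro p hp _
      rw [← hg ⟨p, hp⟩]
      congr 1
      exact Subtype.ext (GP_aeval_deg1 g.toLinearMap hp).symm
    | succ i hi ih =>
      suffices H : ∀ p, p ∈ Submodule.span F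
          ((fun d => (monomial d (1:F) : MvPolynomial (Fin n) F)) ''
            {d : Fin n →₀ ℕ | d.degree = i + 1}) →
          ∀ hp : p ∈ homogeneousSubmodule (Fin n) F (i+1), i + 1 ≤ r →
          σ (ι (i+1) ⟨p, hp⟩) = ι (i+1) ⟨aeval f p, hpres hp⟩ by
        intro p hp hir
        exact H p (by rw [← GP_span]; exact hp) hp hir
      intro p hp'
      induction hp' using Submodule.span_induction with
      | mem q hq =>
        obtain ⟨d, hd, rfl⟩ := hq
        obtain ⟨j, d', hdeq, hd'⟩ := GP_decomp hd
        subst hdeq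
        intro hp hir
        have hb : (monomial d' (1:F) : MvPolynomial (Fin n) F) ∈
            homogeneousSubmodule (Fin n) F i :=
          (mem_homogeneousSubmodule _ _).2 (isHomogeneous_monomial _ hd')
        have ha : (X j : MvPolynomial (Fin n) F) ∈ homogeneousSubmodule (Fin n) F 1 :=
          (mem_homogeneousSubmodule _ _).2 (isHomogeneous_X F j)
        have hq : (monomial (d' + Finsupp.single j 1) (1:F) : MvPolynomial (Fin n) F) =
            monomial d' 1 * X j := by
          rw [show (X j : MvPolynomial (Fin n) F) = monomial (Finsupp.single j 1) 1 from rfl,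
            monomial_mul, mul_one]
        have himem : i ∈ Finset.Icc 1 r := by rw [Finset.mem_Icc]; omega
        have h1mem : (1:ℕ) ∈ Finset.Icc 1 r := by rw [Finset.mem_Icc]; omega
        have hmm := hmul i himem 1 h1mem ⟨monomial d' 1, hb⟩ ⟨X j, ha⟩
        rw [dif_pos hir] at hmm
        have hpe : (⟨monomial (d' + Finsupp.single j 1) 1, hp⟩ :
            ↥(homogeneousSubmodule (Fin n) F (i+1))) = ⟨monomial d' 1 * X j,
              homogeneousSubmodule_mul i 1 (Submodule.mul_mem_mul hb ha)⟩ := Subtype.ext hq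
        rw [hpe, ← hmm, hσm, ih (monomial d' 1) hb (by omega), ← hg ⟨X j, ha⟩]
        have hgx : g ⟨X j, ha⟩ = ⟨f j, hf1 j⟩ := Subtype.ext rfl
        rw [hgx]
        have hmm2 := hmul i himem 1 h1mem ⟨aeval f (monomial d' 1), hpres hb⟩ ⟨f j, hf1 j⟩
        rw [dif_pos hir] at hmm2
        rw [hmm2]
        congr 1
        apply Subtype.ext
        show aeval f (monomial d' 1) * f j = aeval f (monomial (d' + Finsupp.single j 1) 1)
        rw [hq, map_mul, aeval_X]
      | zero =>
        intro hp _
        have h0 : (⟨(0 : MvPolynomial (Fin n) F), hp⟩ :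
            ↥(homogeneousSubmodule (Fin n) F (i+1))) = 0 := rfl
        rw [h0, map_zero, map_zero]
        have : (⟨aeval f (0 : MvPolynomial (Fin n) F), hpres hp⟩ :
            ↥(homogeneousSubmodule (Fin n) F (i+1))) = 0 := by
          apply Subtype.ext; simp
        rw [this, map_zero]
      | add a b ha hb iha ihb =>
        intro hp hir
        have ha' : a ∈ homogeneousSubmodule (Fin n) F (i+1) := by rw [GP_span]; exact ha
        have hb' : b ∈ homogeneousSubmodule (Fin n) F (i+1) := by rw [GP_span]; exact hb
        have h1 : (⟨a + b, hp⟩ : ↥(homogeneousSubmodule (Fin n) F (i+1))) =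
          ⟨a, ha'⟩ + ⟨b, hb'⟩ := rfl
        have h2 : (⟨aeval f (a + b), hpres hp⟩ : ↥(homogeneousSubmodule (Fin n) F (i+1))) =
          ⟨aeval f a, hpres ha'⟩ + ⟨aeval f b, hpres hb'⟩ := by
          apply Subtype.ext; simp
        rw [h1, h2, map_add, map_add, map_add, iha ha' hir, ihb hb' hir]
      | smul c a ha iha =>
        intro hp hir
        have ha' : a ∈ homogeneousSubmodule (Fin n) F (i+1) := by rw [GP_span]; exact ha
        have h1 : (⟨c • a, hp⟩ : ↥(homogeneousSubmodule (Fin n) F (i+1))) = c • ⟨a, ha'⟩ := rfl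
        have h2 : (⟨aeval f (c • a), hpres hp⟩ : ↥(homogeneousSubmodule (Fin n) F (i+1))) =
            c • ⟨aeval f a, hpres ha'⟩ := by
          apply Subtype.ext; simp
        rw [h1, h2, map_smul, map_smul, map_smul, iha ha' hir]
  refine ⟨g, hg, ?_⟩
  intro i hi1 hir x y hxy
  have hk := key i hi1 x.1 x.2 hir
  rw [Subtype.coe_eta] at hk
  rw [hk]
  congr 1
  exact Subtype.ext hxy

set_option maxHeartbeats 1000000 in
/-- **Proposition 1** (symmetric case, Gordeev–Popov): let `F` be a field and identify the
symmetric algebra of the nonzero finite-dimensional space `V = Sym¹(V)` with the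
polynomial ring `F[X_1,…,X_n]` (`n ≥ 1`), `Sym^i(V)` being the homogeneous component of
degree `i`.  Let `r > 1`, `S ⊆ Sym^r(V)` a linear subspace, and
`A = A(V,S) = Sym(V)_+/I(S)` where `I(S) = S ⊕ (⊕_{i>r} Sym^i(V))`; concretely, `A` is
the algebra whose underlying space is the direct sum of the images of maps
`ι i : Sym^i(V) → A` for `1 ≤ i ≤ r` (injective for `i < r`, with kernel `S` for
`i = r`), multiplication being induced by polynomial multiplication (and vanishing above
degree `r`).  Then the automorphisms of `A` mapping the degree-one subspace `V` onto
itself are exactly those induced by elements of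
`GL(V)_S = {g ∈ GL(V) : Sym^r(g)(S) = S}`, acting by `Sym^i(g)` on each graded piece. -/
theorem stmt4 {F A : Type*} [Field F] [AddCommGroup A] [Module F A]
    (n : ℕ) (hn : 0 < n) (r : ℕ) (hr : 1 < r)
    (S : Submodule F (MvPolynomial (Fin n) F))
    (hS : S ≤ homogeneousSubmodule (Fin n) F r)
    (mul : A →ₗ[F] A →ₗ[F] A)
    (ι : ∀ i : ℕ, ↥(homogeneousSubmodule (Fin n) F i) →ₗ[F] A)
    (hinj : ∀ i : ℕ, 1 ≤ i → i < r → Function.Injective (ι i))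
    (hker : LinearMap.ker (ι r) =
      Submodule.comap (homogeneousSubmodule (Fin n) F r).subtype S)
    (hinternal : DirectSum.IsInternal
      (fun i : ℕ => if i ∈ Finset.Icc 1 r then LinearMap.range (ι i) else ⊥))
    (hmul : ∀ i ∈ Finset.Icc 1 r, ∀ j ∈ Finset.Icc 1 r,
      ∀ (x : homogeneousSubmodule (Fin n) F i) (y : homogeneousSubmodule (Fin n) F j),
        mul (ι i x) (ι j y) =
          if h : i + j ≤ r then
            ι (i + j) ⟨(x : MvPolynomial (Fin n) F) * (y : MvPolynomial (Fin n) F),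
              homogeneousSubmodule_mul i j (Submodule.mul_mem_mul x.2 y.2)⟩
          else 0) :
    {σ : A ≃ₗ[F] A |
        (∀ x y : A, σ (mul x y) = mul (σ x) (σ y)) ∧
        Submodule.map σ.toLinearMap (LinearMap.range (ι 1)) = LinearMap.range (ι 1)} =
    {σ : A ≃ₗ[F] A |
        ∃ g : ↥(homogeneousSubmodule (Fin n) F 1) ≃ₗ[F]
              ↥(homogeneousSubmodule (Fin n) F 1),
          ∃ gh : MvPolynomial (Fin n) F →ₐ[F] MvPolynomial (Fin n) F,
            gh = aeval (fun i : Fin n =>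
              (g ⟨X i, (mem_homogeneousSubmodule _ _).2 (isHomogeneous_X F i)⟩ :
                MvPolynomial (Fin n) F)) ∧
            Submodule.map gh.toLinearMap S = S ∧
            ∀ i ∈ Finset.Icc 1 r,
              ∀ x y : homogeneousSubmodule (Fin n) F i,
                gh (x : MvPolynomial (Fin n) F) = (y : MvPolynomial (Fin n) F) →
                  σ (ι i x) = ι i y} := by
  classical
  have hinj1 : Function.Injective (ι 1) := hinj 1 le_rfl hr
  have h1mem : (1:ℕ) ∈ Finset.Icc 1 r := Finset.mem_Icc.mpr ⟨le_rfl, by omega⟩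
  have hrmem : r ∈ Finset.Icc 1 r := Finset.mem_Icc.mpr ⟨by omega, le_rfl⟩
  ext σ
  simp only [Set.mem_setOf_eq]
  constructor
  · rintro ⟨hσm, hσ1⟩
    obtain ⟨g, hg, hkey⟩ := GP_aux n r hr mul ι hinj1 hmul σ hσm hσ1
    have hσm' : ∀ x y : A, σ.symm (mul x y) = mul (σ.symm x) (σ.symm y) := by
      intro x y
      apply σ.injective
      rw [σ.apply_symm_apply, hσm, σ.apply_symm_apply, σ.apply_symm_apply]
    have hσ1' : Submodule.map σ.symm.toLinearMap (LinearMap.range (ι 1)) =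
        LinearMap.range (ι 1) := by
      conv_lhs => rw [← hσ1]
      rw [← Submodule.map_comp]
      convert Submodule.map_id _
      ext x; simp
    obtain ⟨g', hg', hkey'⟩ := GP_aux n r hr mul ι hinj1 hmul σ.symm hσm' hσ1'
    set f : Fin n → MvPolynomial (Fin n) F := fun j =>
      (↑(g ⟨X j, (mem_homogeneousSubmodule _ _).2 (isHomogeneous_X F j)⟩) :
        MvPolynomial (Fin n) F) with hfdef
    set f' : Fin n → MvPolynomial (Fin n) F := fun j =>
      (↑(g' ⟨X j, (mem_homogeneousSubmodule _ _).2 (isHomogeneous_X F j)⟩) :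
        MvPolynomial (Fin n) F) with hf'def
    -- g ∘ g' = id
    have hgg' : ∀ v, g (g' v) = v := by
      intro v
      apply hinj1
      rw [hg, hg', σ.apply_symm_apply]
    have hS_sub : ∀ (τ : A ≃ₗ[F] A)
        (gg : ↥(homogeneousSubmodule (Fin n) F 1) ≃ₗ[F]
              ↥(homogeneousSubmodule (Fin n) F 1)),
        (∀ i, 1 ≤ i → i ≤ r → ∀ (x y : ↥(homogeneousSubmodule (Fin n) F i)),
          aeval (fun j : Fin n =>
              (↑(gg ⟨X j, (mem_homogeneousSubmodule _ _).2 (isHomogeneous_X F j)⟩) :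
            MvPolynomial (Fin n) F)) (x : MvPolynomial (Fin n) F) =
              (y : MvPolynomial (Fin n) F) → τ (ι i x) = ι i y) →
        ∀ p, p ∈ S → aeval (fun j : Fin n =>
              (↑(gg ⟨X j, (mem_homogeneousSubmodule _ _).2 (isHomogeneous_X F j)⟩) :
            MvPolynomial (Fin n) F)) p ∈ S := by
      intro τ gg hkeyg p hp
      have hpH : p ∈ homogeneousSubmodule (Fin n) F r := hS hp
      have hq : aeval (fun j : Fin n =>
              (↑(gg ⟨X j, (mem_homogeneousSubmodule _ _).2 (isHomogeneous_X F j)⟩) :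
            MvPolynomial (Fin n) F)) p ∈ homogeneousSubmodule (Fin n) F r :=
        GP_pres _ (fun j => (gg _).2) hpH
      have h0 : ι r ⟨p, hpH⟩ = 0 := by
        have hmem : (⟨p, hpH⟩ : ↥(homogeneousSubmodule (Fin n) F r)) ∈
            LinearMap.ker (ι r) := by
          rw [hker]; exact hp
        exact LinearMap.mem_ker.mp hmem
      have hτ := hkeyg r hr.le le_rfl ⟨p, hpH⟩ ⟨_, hq⟩ rfl
      rw [h0, map_zero] at hτ
      have hmem : (⟨_, hq⟩ : ↥(homogeneousSubmodule (Fin n) F r)) ∈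
          LinearMap.ker (ι r) := LinearMap.mem_ker.mpr hτ.symm
      rw [hker] at hmem
      exact hmem
    refine ⟨g, aeval f, rfl, ?_, ?_⟩
    · apply le_antisymm
      · rintro _ ⟨p, hp, rfl⟩
        exact hS_sub σ g hkey p hp
      · intro p hp
        have h1 : aeval f' p ∈ S := hS_sub σ.symm g' hkey' p hp
        have h2 : aeval f (aeval f' p) = p := by
          have hcomp : (aeval f).comp (aeval f') =
              AlgHom.id F (MvPolynomial (Fin n) F) := by
            apply MvPolynomial.algHom_ext
            intro j
            simp only [AlgHom.comp_apply, aeval_X, AlgHom.id_apply]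
            rw [hf'def, hfdef]
            rw [GP_aeval_deg1' g
              (g' ⟨X j, (mem_homogeneousSubmodule _ _).2 (isHomogeneous_X F j)⟩).2,
              Subtype.coe_eta, hgg']
          calc aeval f (aeval f' p) = ((aeval f).comp (aeval f')) p := rfl
            _ = p := by rw [hcomp]; rfl
        exact Submodule.mem_map.mpr ⟨aeval f' p, h1, h2⟩
    · intro i hi x y hxy
      have hiI := Finset.mem_Icc.mp hi
      exact hkey i hiI.1 hiI.2 x y hxy
  · rintro ⟨g, gh, hghdef, hSmap, hcomp⟩
    subst hghdef
    have hpres : ∀ {i : ℕ} {p : MvPolynomial (Fin n) F},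
        p ∈ homogeneousSubmodule (Fin n) F i →
        aeval (fun i : Fin n => (↑(g ⟨X i, (mem_homogeneousSubmodule _ _).2 (isHomogeneous_X F i)⟩) : MvPolynomial (Fin n) F)) p ∈ homogeneousSubmodule (Fin n) F i :=
      fun hp => GP_pres _
        (fun j => (g ⟨X j, (mem_homogeneousSubmodule _ _).2 (isHomogeneous_X F j)⟩).2) hp
    constructor
    · -- multiplication preservation
      have htop : ∀ x : A, x ∈ ⨆ i,
          (if i ∈ Finset.Icc 1 r then LinearMap.range (ι i) else ⊥) := by
        rw [hinternal.submodule_iSup_eq_top]; intro x; trivial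
      have hcore : ∀ i ∈ Finset.Icc 1 r, ∀ j ∈ Finset.Icc 1 r,
          ∀ (a : ↥(homogeneousSubmodule (Fin n) F i))
            (b : ↥(homogeneousSubmodule (Fin n) F j)),
          σ (mul (ι i a) (ι j b)) = mul (σ (ι i a)) (σ (ι j b)) := by
        intro i hi j hj a b
        have hA : σ (ι i a) = ι i ⟨aeval (fun i : Fin n => (↑(g ⟨X i, (mem_homogeneousSubmodule _ _).2 (isHomogeneous_X F i)⟩) : MvPolynomial (Fin n) F)) ↑a, hpres a.2⟩ :=
          by have h := hcomp i hi a ⟨_, hpres a.2⟩ rfl; exact h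
        have hB : σ (ι j b) = ι j ⟨aeval (fun i : Fin n => (↑(g ⟨X i, (mem_homogeneousSubmodule _ _).2 (isHomogeneous_X F i)⟩) : MvPolynomial (Fin n) F)) ↑b, hpres b.2⟩ :=
          by have h := hcomp j hj b ⟨_, hpres b.2⟩ rfl; exact h
        rw [hA, hB, hmul i hi j hj a b,
          hmul i hi j hj ⟨aeval (fun i : Fin n => (↑(g ⟨X i, (mem_homogeneousSubmodule _ _).2 (isHomogeneous_X F i)⟩) : MvPolynomial (Fin n) F)) ↑a, hpres a.2⟩ ⟨aeval (fun i : Fin n => (↑(g ⟨X i, (mem_homogeneousSubmodule _ _).2 (isHomogeneous_X F i)⟩) : MvPolynomial (Fin n) F)) ↑b, hpres b.2⟩]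
        by_cases hij : i + j ≤ r
        · rw [dif_pos hij, dif_pos hij]
          have hiI := Finset.mem_Icc.mp hi
          have hijmem : i + j ∈ Finset.Icc 1 r := Finset.mem_Icc.mpr ⟨by omega, hij⟩
          exact hcomp (i+j) hijmem _ _ (map_mul _ _ _)
        · rw [dif_neg hij, dif_neg hij, map_zero]
      intro x
      refine Submodule.iSup_induction (x := x) _ (htop x)
        (motive := fun z => ∀ y, σ (mul z y) = mul (σ z) (σ y)) ?_ ?_ ?_
      · intro i z hz
        by_cases hi : i ∈ Finset.Icc 1 r
        · rw [if_pos hi] at hz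
          obtain ⟨a, rfl⟩ := hz
          intro y
          refine Submodule.iSup_induction (x := y) _ (htop y)
            (motive := fun w => σ (mul (ι i a) w) = mul (σ (ι i a)) (σ w)) ?_ ?_ ?_
          · intro j w hw
            by_cases hj : j ∈ Finset.Icc 1 r
            · rw [if_pos hj] at hw
              obtain ⟨b, rfl⟩ := hw
              exact hcore i hi j hj a b
            · rw [if_neg hj] at hw
              obtain rfl := (Submodule.mem_bot F).mp hw
              simp
          · simp
          · intro u v hu hv
            simp only [map_add]
            rw [hu, hv]
        · rw [if_neg hi] at hz
          obtain rfl := (Submodule.mem_bot F).mp hz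
          intro y; simp
      · intro y; simp
      · intro u v hu hv y
        simp only [map_add, LinearMap.add_apply]
        rw [hu y, hv y]
    · apply le_antisymm
      · rintro _ ⟨_, ⟨a, rfl⟩, rfl⟩
        refine ⟨⟨aeval (fun i : Fin n => (↑(g ⟨X i, (mem_homogeneousSubmodule _ _).2 (isHomogeneous_X F i)⟩) : MvPolynomial (Fin n) F)) ↑a, hpres a.2⟩, (hcomp 1 h1mem a _ rfl).symm⟩
      · rintro _ ⟨b, rfl⟩
        refine Submodule.mem_map.mpr ⟨ι 1 (g.symm b), ⟨g.symm b, rfl⟩, ?_⟩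
        apply hcomp 1 h1mem (g.symm b) b
        rw [GP_aeval_deg1' g (g.symm b).2, Subtype.coe_eta, g.apply_symm_apply]
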